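/- Let α_1, …, α_m ∈ ℂ be distinct and nonzero, let p_1, …, p_m ∈ ℂ[X], and set f(r) := Σ_{i=1}^m p_i(r) α_i^r for r ∈ ℕ. Then for every real s > 0 and every c ∈ ℂ: if r^s · f(r) → c as r → ∞, then c = 0. In other words, a finite exponential polynomial can never be asymptotic to a nonzero multiple of a power-law decay r^{−s} with s > 0. -/

import Mathlib

open scoped BigOperators


open Polynomial Filter

noncomputable def Sop : Module.End ℂ (ℕ → ℂ) where
  toFun f := fun r => f (r + 1)
  map_add' _ _ := rfl
  map_smul' _ _ := rfl

lemma Sop_pow_apply (j : ℕ) (f : ℕ → ℂ) (r : ℕ) : ((Sop ^ j) f) r = f (r + j) := by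
  induction j generalizing f r with
  | zero => rfl
  | succ j ih =>
    rw [pow_succ, Module.End.mul_apply]
    show ((Sop ^ j) (Sop f)) r = _
    rw [ih]
    show f (r + j + 1) = _
    ring_nf

lemma aeval_Sop_apply (q : Polynomial ℂ) (f : ℕ → ℂ) (r : ℕ) :
    ((Polynomial.aeval Sop q) f) r
      = ∑ j ∈ Finset.range (q.natDegree + 1), q.coeff j * f (r + j) := by
  conv_lhs => rw [q.as_sum_range' (q.natDegree + 1) (Nat.lt_succ_self _)]
  rw [map_sum]
  rw [LinearMap.coe_sum, Finset.sum_apply, Finset.sum_apply]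
  refine Finset.sum_congr rfl fun j _ => ?_
  rw [← C_mul_X_pow_eq_monomial, map_mul, map_pow, aeval_X, aeval_C]
  show ((algebraMap ℂ _ (q.coeff j)) * (Sop ^ j)) f r = _
  rw [Module.End.mul_apply]
  rw [Module.algebraMap_end_apply, Pi.smul_apply, Sop_pow_apply]
  simp [smul_eq_mul]

lemma step_apply (a : ℂ) (P : Polynomial ℂ) :
    (Polynomial.aeval Sop (X - C a)) (fun r : ℕ => P.eval (r : ℂ) * a ^ r)
      = fun r : ℕ => (C a * (P.comp (X + 1) - P)).eval (r : ℂ) * a ^ r := by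
  funext r
  rw [map_sub, aeval_X, aeval_C, LinearMap.sub_apply]
  rw [Pi.sub_apply, Module.algebraMap_end_apply, Pi.smul_apply]
  show P.eval ((r + 1 : ℕ) : ℂ) * a ^ (r + 1) - a • (P.eval (r : ℂ) * a ^ r) = _
  simp only [eval_mul, eval_C, eval_sub, eval_comp, eval_add, eval_X, eval_one, smul_eq_mul]
  push_cast
  ring

lemma delta_degree_lt (P : Polynomial ℂ) (hP : P ≠ 0) :
    (P.comp (X + 1) - P).degree < P.degree := by
  have h1 : ((X + 1 : Polynomial ℂ)).natDegree = 1 := by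
    simpa using Polynomial.natDegree_X_add_C (1 : ℂ)
  have hlc : (P.comp (X + 1)).leadingCoeff = P.leadingCoeff := by
    rw [Polynomial.leadingCoeff_comp (by rw [h1]; exact one_ne_zero)]
    have h2 : ((X + 1 : Polynomial ℂ)).leadingCoeff = 1 := by
      simpa using Polynomial.leadingCoeff_X_add_C (1 : ℂ)
    simp [h2]
  have hps : P.comp (X + 1) ≠ 0 := fun h => hP (by
    rw [← Polynomial.leadingCoeff_eq_zero, ← hlc, h, Polynomial.leadingCoeff_zero])
  have hdc : (P.comp (X + 1)).degree = P.degree := by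
    rw [Polynomial.degree_eq_natDegree hps, Polynomial.degree_eq_natDegree hP,
      Polynomial.natDegree_comp, h1, mul_one]
  rw [← hdc]
  exact Polynomial.degree_sub_lt hdc hps (by rw [hlc])

lemma kill_lemma (a : ℂ) : ∀ (d : ℕ) (P : Polynomial ℂ), P.degree < d →
    (Polynomial.aeval Sop ((X - C a) ^ d)) (fun r : ℕ => P.eval (r : ℂ) * a ^ r) = 0 := by
  intro d
  induction d with
  | zero =>
    intro P hP
    have : P = 0 := Polynomial.degree_eq_bot.mp (Nat.WithBot.lt_zero_iff.mp (by simpa using hP))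
    subst this
    have h0 : (fun r : ℕ => (0 : Polynomial ℂ).eval (r : ℂ) * a ^ r) = (0 : ℕ → ℂ) := by
      funext r; simp
    rw [h0, map_zero]
  | succ d ih =>
    intro P hP
    rw [pow_succ, map_mul, Module.End.mul_apply, step_apply]
    apply ih
    by_cases hP0 : P = 0
    · subst hP0
      simp only [Polynomial.zero_comp, sub_zero, mul_zero, Polynomial.degree_zero]
      exact bot_lt_iff_ne_bot.mpr (by simp)
    · calc (C a * (P.comp (X + 1) - P)).degree ≤ (P.comp (X + 1) - P).degree :=
            (Polynomial.degree_mul_le _ _).trans (by simpa using add_le_add (Polynomial.degree_C_le (a := a)) (le_refl (P.comp (X + 1) - P).degree))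
        _ < P.degree := delta_degree_lt P hP0
        _ ≤ (d : WithBot ℕ) := by
            rw [Polynomial.degree_eq_natDegree hP0] at hP ⊢
            exact_mod_cast Nat.lt_succ_iff.mp (by exact_mod_cast hP)


/-- An exponential polynomial `f(r) = ∑ᵢ pᵢ(r) αᵢ^r` with distinct nonzero bases can
never be asymptotic to a nonzero multiple of a power law `r^{-s}` with `s > 0`:
if `r^s f(r) → c` then `c = 0`. -/
theorem exponential_polynomial_no_power_law_decay
    (m : ℕ) (α : Fin m → ℂ) (hα_inj : Function.Injective α)
    (hα_ne : ∀ i, α i ≠ 0)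
    (p : Fin m → Polynomial ℂ)
    (f : ℕ → ℂ)
    (hf : ∀ r : ℕ, f r = ∑ i : Fin m, (p i).eval (r : ℂ) * (α i) ^ r) :
    ∀ s : ℝ, 0 < s → ∀ c : ℂ,
      Filter.Tendsto (fun r : ℕ => (((r : ℝ) ^ s : ℝ) : ℂ) * f r) Filter.atTop (nhds c) →
      c = 0 := by
  intro s hs c hlim
  classical
  set T : Finset (Fin m) := Finset.univ.filter (fun i => α i ≠ 1) with hT
  set q : Polynomial ℂ := ∏ i ∈ T, (X - C (α i)) ^ ((p i).natDegree + 1) with hq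
  set g : ℕ → ℂ := (Polynomial.aeval Sop q) f with hg
  -- f as a sum of basic terms
  have hfs : f = ∑ i : Fin m, (fun r : ℕ => (p i).eval (r : ℂ) * (α i) ^ r) := by
    funext r; rw [hf]; simp [Finset.sum_apply]
  -- per-shift limit
  have haux : ∀ j : ℕ, Tendsto (fun r : ℕ => (((r : ℝ) ^ s : ℝ) : ℂ) * f (r + j))
      atTop (nhds c) := by
    intro j
    have h2 : Tendsto (fun r : ℕ => ((((r + j : ℕ) : ℝ) ^ s : ℝ) : ℂ) * f (r + j))
        atTop (nhds c) := hlim.comp (tendsto_add_atTop_nat j)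
    have h1r : Tendsto (fun r : ℕ => ((r : ℝ) / ((r : ℝ) + (j : ℝ)))) atTop (nhds 1) :=
      tendsto_natCast_div_add_atTop (j : ℝ)
    have h1 : Tendsto (fun r : ℕ => ((r : ℝ) / ((r : ℝ) + (j : ℝ))) ^ s) atTop (nhds 1) := by
      have := h1r.rpow (tendsto_const_nhds : Tendsto (fun _ : ℕ => s) atTop (nhds s))
        (Or.inl one_ne_zero)
      simpa using this
    have h1c : Tendsto (fun r : ℕ => (((((r : ℝ) / ((r : ℝ) + (j : ℝ))) ^ s : ℝ)) : ℂ))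
        atTop (nhds 1) := by
      have := (Complex.continuous_ofReal.tendsto 1).comp h1
      simpa [Function.comp_def] using this
    have hmul := h1c.mul h2
    rw [one_mul] at hmul
    apply hmul.congr'
    filter_upwards [eventually_ge_atTop 1] with r hr
    have hr0 : (0 : ℝ) < (r : ℝ) := by exact_mod_cast hr
    have hrj : (0 : ℝ) < (r : ℝ) + (j : ℝ) := by positivity
    have hne : ((((r : ℝ) + (j : ℝ)) ^ s : ℝ) : ℂ) ≠ 0 := by
      exact_mod_cast (Real.rpow_pos_of_pos hrj s).ne'
    rw [Real.div_rpow hr0.le hrj.le]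
    push_cast
    field_simp
  -- limit of r^s * g r is q.eval 1 * c
  have hgl : Tendsto (fun r : ℕ => (((r : ℝ) ^ s : ℝ) : ℂ) * g r) atTop
      (nhds (q.eval 1 * c)) := by
    have heq : (fun r : ℕ => (((r : ℝ) ^ s : ℝ) : ℂ) * g r)
        = fun r : ℕ => ∑ j ∈ Finset.range (q.natDegree + 1),
            q.coeff j * ((((r : ℝ) ^ s : ℝ) : ℂ) * f (r + j)) := by
      funext r
      rw [hg, aeval_Sop_apply, Finset.mul_sum]
      exact Finset.sum_congr rfl fun j _ => by ring
    rw [heq]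
    have hseval : q.eval 1 * c = ∑ j ∈ Finset.range (q.natDegree + 1),
        q.coeff j * c := by
      rw [Polynomial.eval_eq_sum_range, Finset.sum_mul]
      exact Finset.sum_congr rfl fun j _ => by rw [one_pow, mul_one]
    rw [hseval]
    exact tendsto_finset_sum _ fun j _ => (haux j).const_mul _
  -- g tends to 0
  have hg0 : Tendsto g atTop (nhds 0) := by
    have hneg : Tendsto (fun r : ℕ => (((r : ℝ) ^ (-s) : ℝ) : ℂ)) atTop (nhds 0) := by
      have := (tendsto_rpow_neg_atTop hs).comp
        (tendsto_natCast_atTop_atTop (R := ℝ))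
      have h2 := (Complex.continuous_ofReal.tendsto 0).comp this
      simpa [Function.comp_def] using h2
    have hmul := hgl.mul hneg
    rw [mul_zero] at hmul
    apply hmul.congr'
    filter_upwards [eventually_ge_atTop 1] with r hr
    have hr0 : (0 : ℝ) < (r : ℝ) := by exact_mod_cast hr
    have : ((r : ℝ) ^ s) * ((r : ℝ) ^ (-s)) = 1 := by
      rw [← Real.rpow_add hr0, add_neg_cancel, Real.rpow_zero]
    calc (((r : ℝ) ^ s : ℝ) : ℂ) * g r * (((r : ℝ) ^ (-s) : ℝ) : ℂ)
        = ((((r : ℝ) ^ s) * ((r : ℝ) ^ (-s)) : ℝ) : ℂ) * g r := by push_cast; ring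
      _ = g r := by rw [this]; simp
  -- g is a polynomial sequence
  obtain ⟨Q, hQ⟩ : ∃ Q : Polynomial ℂ, ∀ r : ℕ, g r = Q.eval (r : ℂ) := by
    refine ⟨∑ i ∈ Tᶜ, ∑ j ∈ Finset.range (q.natDegree + 1),
      C (q.coeff j) * (p i).comp (X + C (j : ℂ)), fun r => ?_⟩
    have hgsum : g r = ∑ i : Fin m,
        ((Polynomial.aeval Sop q) (fun r : ℕ => (p i).eval (r : ℂ) * (α i) ^ r)) r := by
      rw [hg, hfs, map_sum, Finset.sum_apply]
    rw [hgsum, ← Finset.sum_compl_add_sum T]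
    have hkill : ∀ i ∈ T,
        ((Polynomial.aeval Sop q) (fun r : ℕ => (p i).eval (r : ℂ) * (α i) ^ r)) r = 0 := by
      intro i hi
      have hfac : q = (∏ x ∈ T.erase i, (X - C (α x)) ^ ((p x).natDegree + 1)) *
          (X - C (α i)) ^ ((p i).natDegree + 1) := by
        rw [hq, ← Finset.mul_prod_erase T _ hi, mul_comm]
      rw [hfac, map_mul, Module.End.mul_apply,
        kill_lemma (α i) ((p i).natDegree + 1) (p i)
          (lt_of_le_of_lt (Polynomial.degree_le_natDegree) (by exact_mod_cast Nat.lt_succ_self _)),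
        map_zero]
      rfl
    rw [Finset.sum_eq_zero hkill, add_zero, Polynomial.eval_finset_sum]
    refine Finset.sum_congr rfl fun i hi => ?_
    have hi1 : α i = 1 := by
      simp only [hT, Finset.mem_compl, Finset.mem_filter, Finset.mem_univ, true_and,
        not_not] at hi
      exact hi
    rw [aeval_Sop_apply, Polynomial.eval_finset_sum]
    refine Finset.sum_congr rfl fun j _ => ?_
    rw [Polynomial.eval_mul, Polynomial.eval_C, Polynomial.eval_comp, Polynomial.eval_add,
      Polynomial.eval_X, Polynomial.eval_C, hi1, one_pow, mul_one]
    push_cast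
    ring_nf
  -- Q must be zero
  have hQev : Tendsto (fun r : ℕ => Q.eval ((r : ℕ) : ℂ)) atTop (nhds 0) :=
    hg0.congr fun r => hQ r
  have hQ0 : Q = 0 := by
    by_contra hne
    rcases lt_or_ge 0 Q.degree with hd | hd
    · have hz : Tendsto (fun r : ℕ => ‖((r : ℕ) : ℂ)‖) atTop atTop := by
        have := tendsto_natCast_atTop_atTop (R := ℝ)
        simpa [Complex.norm_natCast] using this
      have hinf := Q.tendsto_norm_atTop hd hz
      have hto0 : Tendsto (fun r : ℕ => ‖Q.eval ((r : ℕ) : ℂ)‖) atTop (nhds 0) := by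
        exact hQev.norm.congr (fun r => rfl) |>.mono_right (by rw [norm_zero])
      exact absurd hinf (not_tendsto_atTop_of_tendsto_nhds hto0)
    · have hC : Q = C (Q.coeff 0) := Polynomial.eq_C_of_degree_le_zero hd
      have : Q.coeff 0 = 0 := by
        apply tendsto_nhds_unique _ hQev
        rw [hC]
        simpa using (tendsto_const_nhds : Tendsto (fun _ : ℕ => Q.coeff 0) atTop _)
      exact hne (by rw [hC, this, map_zero])
  -- conclude
  have hzero : Tendsto (fun r : ℕ => (((r : ℝ) ^ s : ℝ) : ℂ) * g r) atTop (nhds 0) := by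
    have heq : (fun r : ℕ => (((r : ℝ) ^ s : ℝ) : ℂ) * g r) = fun _ : ℕ => (0 : ℂ) := by
      funext r; rw [hQ r, hQ0]; simp
    rw [heq]; exact tendsto_const_nhds
  have hu : q.eval 1 * c = 0 := tendsto_nhds_unique hgl hzero
  have hq1 : q.eval 1 ≠ 0 := by
    rw [hq, Polynomial.eval_prod]
    apply Finset.prod_ne_zero_iff.mpr
    intro i hi
    rw [Polynomial.eval_pow, Polynomial.eval_sub, Polynomial.eval_X, Polynomial.eval_C]
    apply pow_ne_zero
    rw [sub_ne_zero]
    have := (Finset.mem_filter.mp (hT ▸ hi)).2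
    exact fun h => this h.symm
  exact (mul_eq_zero.mp hu).resolve_left hq1
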